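/- Let (X, d) be a finite set with a distance function, n = |X| ≥ 3, m_1 = min_{x≠y} d(x,y)², and let S ⊆ X with |S| ≥ 2. For W ≥ 1 let w_W be the weight function with w_W(x) = W for x ∈ S and w_W(x) = 1 otherwise. If C is a k-clustering of X in which some cluster contains two distinct elements of S, then the k-means cost of C with respect to (w_W[X], d) is at least W²·m_1 / (|S|·W + n). -/
import Mathlib


open Finset

/-- A weight function assigns a positive real weight to every point. -/
def IsWeight {X : Type*} (w : X → ℝ) : Prop := ∀ x, 0 < w x

/-- A k-clustering: a partition of `X` into `k` pairwise disjoint nonempty parts. -/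
def IsClustering {X : Type*} [Fintype X] [DecidableEq X]
    (C : Finset (Finset X)) (k : ℕ) : Prop :=
  C.card = k ∧ (∀ A ∈ C, A.Nonempty) ∧
  (∀ A ∈ C, ∀ B ∈ C, A ≠ B → Disjoint A B) ∧
  (∀ x : X, ∃ A ∈ C, x ∈ A)

/-- `x ∼_C y`: `x` and `y` lie in the same cluster of `C`. -/
def SameCluster {X : Type*} [DecidableEq X] (C : Finset (Finset X)) (x y : X) : Prop :=
  ∃ A ∈ C, x ∈ A ∧ y ∈ A

/-- The k-means cost of a clustering `C` of weighted data `(w[X], d)`: for each cluster, the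
sum over unordered pairs of distinct points of `d(x,y)² w(x) w(y)` (written as half the sum
over ordered pairs of distinct points), divided by the cluster weight. -/
noncomputable def kmeansCost {X : Type*} [DecidableEq X]
    (C : Finset (Finset X)) (w : X → ℝ) (d : X → X → ℝ) : ℝ :=
  ∑ A ∈ C, ((1 / 2) * ∑ p ∈ A.offDiag, d p.1 p.2 ^ 2 * w p.1 * w p.2) / (∑ x ∈ A, w x)

/-- The min-sum cost of a clustering `C` of weighted data `(w[X], d)`: the sum over clusters
of the sum over unordered pairs of distinct points of `d(x,y) w(x) w(y)`. -/
noncomputable def minSumCost {X : Type*} [DecidableEq X]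
    (C : Finset (Finset X)) (w : X → ℝ) (d : X → X → ℝ) : ℝ :=
  ∑ A ∈ C, (1 / 2) * ∑ p ∈ A.offDiag, d p.1 p.2 * w p.1 * w p.2

/-- with weight `W ≥ 1` on the points of `S` and weight `1` elsewhere, any
k-clustering in which some cluster contains two distinct elements of `S` has k-means cost
at least `W² m₁ / (|S| W + n)`, where `n = |X| ≥ 3` and `m₁ = min_{x ≠ y} d(x,y)²`. -/
theorem kmeansCost_lower_bound_of_not_separated
    {X : Type*} [Fintype X] [DecidableEq X]
    (d : X → X → ℝ) (hsym : ∀ x y, d x y = d y x) (hnn : ∀ x y, 0 ≤ d x y)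
    (hzero : ∀ x y, d x y = 0 ↔ x = y)
    (hn : 3 ≤ Fintype.card X)
    (S : Finset X) (hS : 2 ≤ S.card)
    (k : ℕ) (hk1 : 1 < k) (hk2 : k < Fintype.card X)
    (C : Finset (Finset X)) (hC : IsClustering C k)
    (Ci : Finset X) (hCi : Ci ∈ C) (x y : X) (hx : x ∈ Ci) (hy : y ∈ Ci)
    (hxS : x ∈ S) (hyS : y ∈ S) (hxy : x ≠ y)
    (W : ℝ) (hW : 1 ≤ W) :
    W ^ 2 *
        ((Finset.univ : Finset X).offDiag.inf'
          (by
            obtain ⟨a, b, hab⟩ := Fintype.exists_pair_of_one_lt_card (by omega : 1 < Fintype.card X)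
            exact ⟨(a, b), Finset.mem_offDiag.mpr ⟨Finset.mem_univ a, Finset.mem_univ b, hab⟩⟩)
          (fun p => d p.1 p.2 ^ 2)) /
        ((S.card : ℝ) * W + (Fintype.card X : ℝ))
      ≤ kmeansCost C (fun z => if z ∈ S then W else 1) d := by
  classical
  set w : X → ℝ := fun z => if z ∈ S then W else 1 with hw_def
  have hW0 : (0:ℝ) < W := lt_of_lt_of_le one_pos hW
  have hw1 : ∀ z, (1:ℝ) ≤ w z := by
    intro z; simp only [hw_def]; split
    · exact hW
    · exact le_refl 1
  have hwpos : ∀ z, (0:ℝ) < w z := fun z => lt_of_lt_of_le one_pos (hw1 z)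
  have hne : ((univ : Finset X).offDiag).Nonempty :=
    ⟨(x, y), mem_offDiag.mpr ⟨mem_univ x, mem_univ y, hxy⟩⟩
  set m := (univ : Finset X).offDiag.inf' hne (fun p => d p.1 p.2 ^ 2) with hm
  have hm_nonneg : 0 ≤ m := Finset.le_inf' hne _ (fun p _ => sq_nonneg _)
  have hm_le : m ≤ d x y ^ 2 :=
    Finset.inf'_le _ (show ((x, y) : X × X) ∈ (univ : Finset X).offDiag from
      mem_offDiag.mpr ⟨mem_univ x, mem_univ y, hxy⟩)
  have hterm_nonneg : ∀ (A : Finset X),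
      0 ≤ ((1 / 2) * ∑ p ∈ A.offDiag, d p.1 p.2 ^ 2 * w p.1 * w p.2) / (∑ z ∈ A, w z) := by
    intro A
    apply div_nonneg
    · apply mul_nonneg (by norm_num)
      apply Finset.sum_nonneg
      intro p _
      exact mul_nonneg (mul_nonneg (sq_nonneg _) (hwpos _).le) (hwpos _).le
    · exact Finset.sum_nonneg (fun z _ => (hwpos z).le)
  -- the cost is at least the term for Ci
  have hstep1 : ((1 / 2) * ∑ p ∈ Ci.offDiag, d p.1 p.2 ^ 2 * w p.1 * w p.2) / (∑ z ∈ Ci, w z)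
      ≤ kmeansCost C w d := by
    unfold kmeansCost
    exact Finset.single_le_sum (f := fun A => ((1 / 2) * ∑ p ∈ A.offDiag, d p.1 p.2 ^ 2 * w p.1 * w p.2) / (∑ z ∈ A, w z)) (fun A _ => hterm_nonneg A) hCi
  -- numerator lower bound
  have hpairs : ({(x, y), (y, x)} : Finset (X × X)) ⊆ Ci.offDiag := by
    intro p hp
    rcases Finset.mem_insert.mp hp with h | h
    · subst h; exact mem_offDiag.mpr ⟨hx, hy, hxy⟩
    · rw [Finset.mem_singleton] at h; subst h
      exact mem_offDiag.mpr ⟨hy, hx, fun h => hxy h.symm⟩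
  have hnum : W ^ 2 * m ≤ (1 / 2) * ∑ p ∈ Ci.offDiag, d p.1 p.2 ^ 2 * w p.1 * w p.2 := by
    have h1 : ∑ p ∈ ({(x, y), (y, x)} : Finset (X × X)), d p.1 p.2 ^ 2 * w p.1 * w p.2
        ≤ ∑ p ∈ Ci.offDiag, d p.1 p.2 ^ 2 * w p.1 * w p.2 := by
      apply Finset.sum_le_sum_of_subset_of_nonneg hpairs
      intro p _ _
      exact mul_nonneg (mul_nonneg (sq_nonneg _) (hwpos _).le) (hwpos _).le
    have hne' : ((x, y) : X × X) ≠ (y, x) := by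
      intro h; exact hxy (congrArg Prod.fst h)
    rw [Finset.sum_pair hne'] at h1
    have hwx : w x = W := if_pos hxS
    have hwy : w y = W := if_pos hyS
    simp only [hwx, hwy] at h1
    have hdy : d y x = d x y := hsym y x
    rw [hdy] at h1
    have h2 : W ^ 2 * m ≤ (1 / 2) * (d x y ^ 2 * W * W + d x y ^ 2 * W * W) := by
      have : W ^ 2 * m ≤ W ^ 2 * (d x y ^ 2) :=
        mul_le_mul_of_nonneg_left hm_le (sq_nonneg W)
      nlinarith [this]
    calc W ^ 2 * m ≤ (1 / 2) * (d x y ^ 2 * W * W + d x y ^ 2 * W * W) := h2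
      _ ≤ _ := by linarith [h1]
  -- denominator bounds
  have hDpos : 0 < ∑ z ∈ Ci, w z := Finset.sum_pos (fun z _ => hwpos z) ⟨x, hx⟩
  have hDle : ∑ z ∈ Ci, w z ≤ (S.card : ℝ) * W + (Fintype.card X : ℝ) := by
    have h1 : ∑ z ∈ Ci, w z ≤ ∑ z ∈ (univ : Finset X), w z :=
      Finset.sum_le_sum_of_subset_of_nonneg (Finset.subset_univ Ci)
        (fun z _ _ => (hwpos z).le)
    have h2 : ∑ z ∈ (univ : Finset X), w z = (S.card : ℝ) * W + (Sᶜ.card : ℝ) := by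
      rw [← Finset.sum_add_sum_compl S]
      congr 1
      · rw [Finset.sum_congr rfl (fun z hz => if_pos hz), Finset.sum_const, nsmul_eq_mul]
      · rw [Finset.sum_congr rfl (fun z hz => if_neg (Finset.mem_compl.mp hz)),
          Finset.sum_const, nsmul_eq_mul, mul_one]
    have h3 : (Sᶜ.card : ℝ) ≤ (Fintype.card X : ℝ) := by
      exact_mod_cast Finset.card_le_univ Sᶜ
    linarith
  have hbound : W ^ 2 * m / ((S.card : ℝ) * W + (Fintype.card X : ℝ))
      ≤ ((1 / 2) * ∑ p ∈ Ci.offDiag, d p.1 p.2 ^ 2 * w p.1 * w p.2) / (∑ z ∈ Ci, w z) := by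
    apply div_le_div₀ (le_trans (mul_nonneg (sq_nonneg W) hm_nonneg) hnum) hnum hDpos hDle
  exact le_trans hbound hstep1
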